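/- Let f : ℝⁿ → ℝ be differentiable, α-strongly convex, and β-smooth, with minimizer x* and minimum f*, and κ = β/α. Then for every x, x* lies in the closed ball centered at x⁺⁺ = x − (1/α)∇f(x) of squared radius (1 − 1/κ)‖∇f(x)‖²/α² − (2/α)(f(x⁺) − f*), where x⁺ = x − (1/β)∇f(x). -/

import Mathlib

open scoped RealInnerProductSpace

theorem stmt7 (n : ℕ) (f : EuclideanSpace ℝ (Fin n) → ℝ)
    (f' : EuclideanSpace ℝ (Fin n) → EuclideanSpace ℝ (Fin n))
    (α β : ℝ) (hα : 0 < α) (hαβ : α ≤ β)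
    (hdiff : ∀ p, HasGradientAt f (f' p) p)
    (hsc : ∀ p q, f p + ⟪f' p, q - p⟫ + α/2 * ‖q - p‖^2 ≤ f q)
    (hsm : ∀ p q, f q ≤ f p + ⟪f' p, q - p⟫ + β/2 * ‖q - p‖^2)
    (xstar : EuclideanSpace ℝ (Fin n)) (hmin : ∀ p, f xstar ≤ f p)
    (x : EuclideanSpace ℝ (Fin n)) :
    ‖xstar - (x - (1/α) • f' x)‖^2
      ≤ (1 - 1/(β/α)) * ‖f' x‖^2/α^2
        - (2/α) * (f (x - (1/β) • f' x) - f xstar) := by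
  have hβ : 0 < β := lt_of_lt_of_le hα hαβ
  have h1 := hsc x xstar
  have h2 := hsm x (x - (1/β) • f' x)
  have hq : x - (1/β) • f' x - x = (-(1/β)) • f' x := by
    rw [neg_smul]; abel
  rw [hq, real_inner_smul_right, norm_smul, mul_pow, real_inner_self_eq_norm_sq] at h2
  have he : xstar - (x - (1/α) • f' x) = (xstar - x) + (1/α) • f' x := by abel
  rw [he, norm_add_sq_real, real_inner_smul_right, norm_smul, mul_pow,
    real_inner_comm] at *
  have habs : ‖(1:ℝ)/α‖ = 1/α := by
    rw [Real.norm_eq_abs, abs_of_pos (by positivity)]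
  have habs2 : ‖-(1/β)‖ = 1/β := by
    rw [Real.norm_eq_abs, abs_neg, abs_of_pos (by positivity)]
  rw [habs] at *
  rw [habs2] at h2
  rw [one_div_div]
  have hα' : α ≠ 0 := ne_of_gt hα
  have hβ' : β ≠ 0 := ne_of_gt hβ
  have key : f (x - (1/β) • f' x) ≤ f x - ‖f' x‖^2 / (2*β) := by
    have heq : f x + -(1/β) * ‖f' x‖^2 + β/2 * ((1/β)^2 * ‖f' x‖^2)
        = f x - ‖f' x‖^2 / (2*β) := by field_simp; ring
    linarith [h2]
  set I : ℝ := ⟪xstar - x, f' x⟫ with hI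
  set A : ℝ := ‖f' x‖^2 with hA
  set N : ℝ := ‖xstar - x‖^2 with hN
  have hIq : inner ℝ (f' x) (xstar - x) = I := real_inner_comm _ _
  rw [hIq]
  have key' : A ≤ (f x - f (x - (1/β) • f' x)) * (2*β) := by
    rw [← div_le_iff₀ (by positivity : (0:ℝ) < 2*β)]; linarith [key]
  have hpos : (0:ℝ) < α^2*β := by positivity
  rw [← mul_le_mul_iff_right₀ hpos]
  have hlhs : α^2*β * (N + 2*(1/α*I) + (1/α)^2*A) = α^2*β*N + 2*α*β*I + β*A := by
    field_simp
  have hrhs : α^2*β * ((1 - α/β) * A / α^2 - 2/α*(f (x - (1/β) • f' x) - f xstar))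
      = (β - α)*A - 2*α*β*(f (x - (1/β) • f' x) - f xstar) := by
    field_simp
  rw [hlhs, hrhs]
  nlinarith [mul_le_mul_of_nonneg_left h1 (show (0:ℝ) ≤ 2*α*β by positivity),
    mul_le_mul_of_nonneg_left key' hα.le]
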